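/- Let K ⊆ ℝ^{r×r} be a nonempty compact set every element of which is stable. Then there exists a constant c > 0 such that for every A_r ∈ K and every M ∈ ℝ^{r×r}, if Z ∈ ℝ^{r×r} satisfies the Lyapunov equation A_r Z + Z A_rᵀ + M = 0, then ‖Z‖_F ≤ c ‖M‖_F. -/

import Mathlib

open Matrix

/-- A square real matrix is stable if every eigenvalue (as a complex matrix)
has negative real part. -/
def IsStable {r : ℕ} (A : Matrix (Fin r) (Fin r) ℝ) : Prop :=
  ∀ μ ∈ spectrum ℂ (A.map Complex.ofReal), μ.re < 0

/-- The Frobenius norm of a real matrix. -/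
noncomputable def frobNorm {m n : ℕ} (M : Matrix (Fin m) (Fin n) ℝ) : ℝ :=
  Real.sqrt (Matrix.trace (Mᵀ * M))

section Aux

open Polynomial

lemma matrix_mem_spectrum_of_charpoly_root {n : ℕ} (B : Matrix (Fin n) (Fin n) ℂ) (μ : ℂ)
    (h : B.charpoly.eval μ = 0) : μ ∈ spectrum ℂ B := by
  rw [spectrum.mem_iff]
  intro hu
  rw [Matrix.isUnit_iff_isUnit_det] at hu
  have hdet : B.charpoly.eval μ
      = (algebraMap ℂ (Matrix (Fin n) (Fin n) ℂ) μ - B).det := by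
    have h1 : B.charpoly.eval μ = ((evalRingHom μ).mapMatrix (charmatrix B)).det := by
      rw [Matrix.charpoly]
      exact RingHom.map_det (evalRingHom μ) (charmatrix B)
    rw [h1]
    congr 1
    ext i j
    by_cases hij : i = j
    · subst hij
      simp [charmatrix_apply_eq, Matrix.algebraMap_matrix_apply]
    · simp [charmatrix_apply_ne _ _ _ hij, Matrix.algebraMap_matrix_apply, hij]
  rw [hdet] at h
  rw [h] at hu
  exact hu.ne_zero rfl

lemma matrix_spectrum_transpose {n : ℕ} (B : Matrix (Fin n) (Fin n) ℂ) :
    spectrum ℂ Bᵀ = spectrum ℂ B := by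
  ext μ
  rw [spectrum.mem_iff, spectrum.mem_iff, not_iff_not, Matrix.isUnit_iff_isUnit_det,
    Matrix.isUnit_iff_isUnit_det]
  have key : algebraMap ℂ (Matrix (Fin n) (Fin n) ℂ) μ - Bᵀ
      = (algebraMap ℂ (Matrix (Fin n) (Fin n) ℂ) μ - B)ᵀ := by
    rw [Matrix.transpose_sub]
    congr 1
    ext i j
    by_cases hij : i = j
    · subst hij; simp [Matrix.algebraMap_matrix_apply]
    · simp [Matrix.algebraMap_matrix_apply, hij, Ne.symm hij]
  rw [key, Matrix.det_transpose]

lemma lyap_injective {r : ℕ} (A : Matrix (Fin r) (Fin r) ℝ) (hA : IsStable A)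
    (Z : Matrix (Fin r) (Fin r) ℝ) (hZ : A * Z + Z * Aᵀ = 0) : Z = 0 := by
  rcases Nat.eq_zero_or_pos r with h0 | hr
  · subst h0; ext i j; exact i.elim0
  set A' : Matrix (Fin r) (Fin r) ℂ := A.map Complex.ofReal with hA'def
  set Z' : Matrix (Fin r) (Fin r) ℂ := Z.map Complex.ofReal with hZ'def
  set B : Matrix (Fin r) (Fin r) ℂ := -A'ᵀ with hBdef
  have hmap : A' * Z' + Z' * A'ᵀ = 0 := by
    ext i j
    have h2 := congrFun (congrFun hZ i) j
    simp only [Matrix.add_apply, Matrix.mul_apply, Matrix.zero_apply,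
      Matrix.transpose_apply, Matrix.map_apply, hA'def, hZ'def] at h2 ⊢
    exact_mod_cast h2
  have key : A' * Z' = Z' * B := by
    rw [hBdef, mul_neg]
    exact eq_neg_of_add_eq_zero_left hmap
  have hpow : ∀ k : ℕ, A' ^ k * Z' = Z' * B ^ k := by
    intro k
    induction k with
    | zero => simp
    | succ k ih =>
      rw [pow_succ', mul_assoc, ih, ← mul_assoc, key, mul_assoc, ← pow_succ']
  have hpoly : ∀ p : ℂ[X], aeval A' p * Z' = Z' * aeval B p := by
    intro p
    induction p using Polynomial.induction_on' with
    | add p q hp hq => rw [map_add, map_add, add_mul, mul_add, hp, hq]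
    | monomial n a =>
      rw [aeval_monomial, aeval_monomial, mul_assoc, hpow n, ← mul_assoc,
        Algebra.commutes a Z', mul_assoc]
  have hch : Z' * aeval B A'.charpoly = 0 := by
    rw [← hpoly, Matrix.aeval_self_charpoly, zero_mul]
  have hunit : IsUnit (aeval B A'.charpoly) := by
    by_contra hnu
    have h0 : (0 : ℂ) ∈ spectrum ℂ (aeval B A'.charpoly) := by
      rw [spectrum.mem_iff]
      simpa [zero_sub, IsUnit.neg_iff] using hnu
    have hdeg : 0 < A'.charpoly.degree := by
      rw [Matrix.charpoly_degree_eq_dim]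
      simpa using hr
    rw [spectrum.map_polynomial_aeval_of_degree_pos B A'.charpoly hdeg] at h0
    obtain ⟨μ, hμB, hμ0⟩ := h0
    have hμT : -μ ∈ spectrum ℂ A'ᵀ := by
      rw [← spectrum.neg_eq] at hμB
      exact Set.mem_neg.mp hμB
    have hμA : -μ ∈ spectrum ℂ A' := by
      rwa [matrix_spectrum_transpose] at hμT
    have h1 : (-μ).re < 0 := hA (-μ) hμA
    have h2 : μ.re < 0 := hA μ (matrix_mem_spectrum_of_charpoly_root A' μ hμ0)
    rw [Complex.neg_re] at h1
    linarith
  have hZ'0 : Z' = 0 := hunit.mul_right_cancel (by rw [hch, zero_mul])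
  ext i j
  have := congrFun (congrFun hZ'0 i) j
  simpa [hZ'def, Matrix.map_apply, Complex.ofReal_eq_zero] using this

lemma frobNorm_eq {m n : ℕ} (M : Matrix (Fin m) (Fin n) ℝ) :
    frobNorm M = Real.sqrt (∑ i, ∑ j, (M i j) ^ 2) := by
  unfold frobNorm
  congr 1
  have : Matrix.trace (Mᵀ * M) = ∑ j, ∑ i, M i j * M i j := by
    simp [Matrix.trace, Matrix.diag, Matrix.mul_apply, Matrix.transpose_apply]
  rw [this, Finset.sum_comm]
  simp [sq]

lemma frobNorm_nonneg {m n : ℕ} (M : Matrix (Fin m) (Fin n) ℝ) : 0 ≤ frobNorm M :=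
  Real.sqrt_nonneg _

lemma frobNorm_zero {m n : ℕ} : frobNorm (0 : Matrix (Fin m) (Fin n) ℝ) = 0 := by
  simp [frobNorm_eq]

lemma frobNorm_neg {m n : ℕ} (M : Matrix (Fin m) (Fin n) ℝ) : frobNorm (-M) = frobNorm M := by
  simp [frobNorm_eq]

lemma frobNorm_smul {m n : ℕ} (s : ℝ) (M : Matrix (Fin m) (Fin n) ℝ) :
    frobNorm (s • M) = |s| * frobNorm M := by
  rw [frobNorm_eq, frobNorm_eq]
  have : ∑ i, ∑ j, ((s • M) i j) ^ 2 = s ^ 2 * ∑ i, ∑ j, (M i j) ^ 2 := by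
    simp [Matrix.smul_apply, mul_pow, Finset.mul_sum]
  rw [this, Real.sqrt_mul (sq_nonneg s), Real.sqrt_sq_eq_abs]

lemma frobNorm_pos {m n : ℕ} {M : Matrix (Fin m) (Fin n) ℝ} (h : M ≠ 0) : 0 < frobNorm M := by
  rw [frobNorm_eq]
  apply Real.sqrt_pos.mpr
  have hM : ∃ i j, M i j ≠ 0 := by
    by_contra h'
    push_neg at h'
    exact h (by ext i j; simpa using h' i j)
  obtain ⟨i, j, hij⟩ := hM
  have h1 : 0 < (M i j) ^ 2 := (sq_nonneg _).lt_of_ne (Ne.symm (pow_ne_zero 2 hij))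
  have h2 : (M i j) ^ 2 ≤ ∑ j', (M i j') ^ 2 :=
    Finset.single_le_sum (f := fun j' => (M i j') ^ 2) (fun k _ => sq_nonneg _)
      (Finset.mem_univ j)
  have h3 : ∑ j', (M i j') ^ 2 ≤ ∑ i', ∑ j', (M i' j') ^ 2 :=
    Finset.single_le_sum (f := fun i' => ∑ j', (M i' j') ^ 2)
      (fun k _ => Finset.sum_nonneg fun _ _ => sq_nonneg _) (Finset.mem_univ i)
  linarith

lemma frobNorm_one {r : ℕ} : frobNorm (1 : Matrix (Fin r) (Fin r) ℝ) = Real.sqrt r := by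
  unfold frobNorm
  rw [Matrix.transpose_one, one_mul, Matrix.trace_one]
  simp

lemma continuous_frobNorm {m n : ℕ} :
    Continuous (fun M : Matrix (Fin m) (Fin n) ℝ => frobNorm M) := by
  simp only [frobNorm_eq]
  exact Real.continuous_sqrt.comp <|
    continuous_finset_sum _ fun i _ => continuous_finset_sum _ fun j _ =>
      (continuous_id.matrix_elem i j).pow 2

end Aux

/-- uniform bound on solutions of the Lyapunov equation
`A_r Z + Z A_rᵀ + M = 0` over a compact set `K` of stable matrices `A_r`. -/
theorem lyapunov_uniform_bound {r : ℕ}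
    (K : Set (Matrix (Fin r) (Fin r) ℝ)) (hKne : K.Nonempty)
    (hKcpt : IsCompact K) (hKstable : ∀ M ∈ K, IsStable M) :
    ∃ c > (0 : ℝ), ∀ A_r ∈ K, ∀ M Z : Matrix (Fin r) (Fin r) ℝ,
      A_r * Z + Z * A_rᵀ + M = 0 → frobNorm Z ≤ c * frobNorm M := by
  rcases Nat.eq_zero_or_pos r with h0 | hr
  · refine ⟨1, one_pos, fun A hAK M Z hZeq => ?_⟩
    subst h0
    have hZ : Z = 0 := by ext i j; exact i.elim0
    rw [hZ, frobNorm_zero]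
    exact mul_nonneg zero_le_one (frobNorm_nonneg M)
  · set S : Set (Matrix (Fin r) (Fin r) ℝ) := {Z | frobNorm Z = 1} with hSdef
    have hSclosed : IsClosed S := isClosed_singleton.preimage continuous_frobNorm
    have hCcpt : IsCompact
        (Set.univ.pi fun _ : Fin r => Set.univ.pi fun _ : Fin r => Set.Icc (-1 : ℝ) 1 :
          Set (Matrix (Fin r) (Fin r) ℝ)) :=
      isCompact_univ_pi fun _ => isCompact_univ_pi fun _ => isCompact_Icc
    have hsub : S ⊆ (Set.univ.pi fun _ : Fin r => Set.univ.pi fun _ : Fin r =>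
        Set.Icc (-1 : ℝ) 1) := by
      intro Z hZ
      have hsum : ∑ i, ∑ j, (Z i j) ^ 2 = 1 := by
        have := hZ
        rw [hSdef, Set.mem_setOf_eq, frobNorm_eq, Real.sqrt_eq_one] at this
        exact this
      intro i _
      intro j _
      have h2 : (Z i j) ^ 2 ≤ 1 := by
        have hy : (Z i j) ^ 2 ≤ ∑ j', (Z i j') ^ 2 :=
          Finset.single_le_sum (f := fun j' => (Z i j') ^ 2) (fun k _ => sq_nonneg _)
            (Finset.mem_univ j)
        have hx : ∑ j', (Z i j') ^ 2 ≤ ∑ i', ∑ j', (Z i' j') ^ 2 :=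
          Finset.single_le_sum (f := fun i' => ∑ j', (Z i' j') ^ 2)
            (fun k _ => Finset.sum_nonneg fun _ _ => sq_nonneg _) (Finset.mem_univ i)
        linarith [hsum ▸ le_trans hy hx]
      have habs : |Z i j| ≤ 1 := by
        rw [← Real.sqrt_sq_eq_abs]
        calc Real.sqrt ((Z i j) ^ 2) ≤ Real.sqrt 1 := Real.sqrt_le_sqrt h2
          _ = 1 := Real.sqrt_one
      exact abs_le.mp habs
    have hScpt : IsCompact S := hCcpt.of_isClosed_subset hSclosed hsub
    have hrpos : (0 : ℝ) < Real.sqrt r := Real.sqrt_pos.mpr (by exact_mod_cast hr)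
    have hSne : S.Nonempty := by
      refine ⟨(Real.sqrt r)⁻¹ • (1 : Matrix (Fin r) (Fin r) ℝ), ?_⟩
      rw [hSdef, Set.mem_setOf_eq, frobNorm_smul, frobNorm_one,
        abs_of_pos (inv_pos.mpr hrpos)]
      field_simp
    have hKS : IsCompact (K ×ˢ S) := hKcpt.prod hScpt
    have hKSne : (K ×ˢ S).Nonempty := hKne.prod hSne
    have hfc : ContinuousOn
        (fun p : Matrix (Fin r) (Fin r) ℝ × Matrix (Fin r) (Fin r) ℝ =>
          frobNorm (p.1 * p.2 + p.2 * p.1ᵀ)) (K ×ˢ S) :=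
      (continuous_frobNorm.comp ((continuous_fst.matrix_mul continuous_snd).add
        (continuous_snd.matrix_mul continuous_fst.matrix_transpose))).continuousOn
    obtain ⟨p₀, hp₀S, hp₀min⟩ := hKS.exists_isMinOn hKSne hfc
    set m := frobNorm (p₀.1 * p₀.2 + p₀.2 * p₀.1ᵀ) with hmdef
    have hm : 0 < m := by
      apply frobNorm_pos
      intro hzero
      have h2 := lyap_injective p₀.1 (hKstable _ hp₀S.1) p₀.2 hzero
      have h3 : frobNorm p₀.2 = 1 := hp₀S.2
      rw [h2, frobNorm_zero] at h3
      exact one_ne_zero h3.symm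
    refine ⟨m⁻¹, inv_pos.mpr hm, fun A hAK M Z hZeq => ?_⟩
    by_cases hZ0 : Z = 0
    · rw [hZ0, frobNorm_zero]
      exact mul_nonneg (inv_nonneg.mpr hm.le) (frobNorm_nonneg M)
    · set t := frobNorm Z with htdef
      have ht : 0 < t := frobNorm_pos hZ0
      have hW : frobNorm (t⁻¹ • Z) = 1 := by
        rw [frobNorm_smul, abs_of_pos (inv_pos.mpr ht), ← htdef]
        field_simp
      have hmem : (A, t⁻¹ • Z) ∈ K ×ˢ S := Set.mk_mem_prod hAK hW
      have hmin' := isMinOn_iff.mp hp₀min (A, t⁻¹ • Z) hmem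
      have hmin : m ≤ frobNorm (A * (t⁻¹ • Z) + (t⁻¹ • Z) * Aᵀ) := hmin'
      have hAZ : A * Z + Z * Aᵀ = -M := eq_neg_of_add_eq_zero_left hZeq
      have hcalc : A * (t⁻¹ • Z) + (t⁻¹ • Z) * Aᵀ = t⁻¹ • (-M) := by
        rw [Matrix.mul_smul, Matrix.smul_mul, ← smul_add, hAZ]
      rw [hcalc, frobNorm_smul, frobNorm_neg, abs_of_pos (inv_pos.mpr ht)] at hmin
      have h1 : m * t ≤ frobNorm M := by
        have h2 := mul_le_mul_of_nonneg_right hmin ht.le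
        rwa [inv_mul_eq_div, div_mul_cancel₀ _ ht.ne'] at h2
      calc t = m⁻¹ * (m * t) := by field_simp
        _ ≤ m⁻¹ * frobNorm M := mul_le_mul_of_nonneg_left h1 (inv_nonneg.mpr hm.le)
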